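/- arXiv:1110.1466 — 3 statements merged into one kernel-verified Lean document; each statement's English description precedes it below -/
import Mathlib

section
/- Let R be a ℚ-domain (an integral domain containing ℚ), n ≥ 1 arbitrary, and let D be a locally nilpotent R-derivation of R[x_1,…,x_n]. Then: (i) if exp D belongs to J(R; x_1,…,x_n), then D is triangular; (ii) if exp D is affine, then D is affine. -/
open MvPolynomial

/-- The group of `R`-algebra automorphisms of the polynomial ring `R[x_1,…,x_n]`. -/
abbrev PolyAut (R : Type*) [CommRing R] (n : ℕ) :=
  MvPolynomial (Fin n) R ≃ₐ[R] MvPolynomial (Fin n) R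

/-- An automorphism is affine if `φ(x_i) = Σ_j a_{i,j} x_j + b_i` with `(a_{i,j})` invertible. -/
def IsAffineAut {R : Type*} [CommRing R] {n : ℕ} (φ : PolyAut R n) : Prop :=
  ∃ (a : Matrix (Fin n) (Fin n) R) (b : Fin n → R), IsUnit a.det ∧
    ∀ i, φ (X i) = (∑ j, C (a i j) * X j) + C (b i)

/-- The exponential map of a derivation of `R[x_1,…,x_n]` over a `ℚ`-domain `R`. -/
noncomputable def expMap {R : Type*} [CommRing R] [Algebra ℚ R] {n : ℕ}
    (D : Derivation R (MvPolynomial (Fin n) R) (MvPolynomial (Fin n) R))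
    (g : MvPolynomial (Fin n) R) : MvPolynomial (Fin n) R :=
  ∑ᶠ m : ℕ, (m.factorial : ℚ)⁻¹ • ((D.toLinearMap ^ m) g)


set_option linter.unusedSectionVars false
set_option linter.unnecessarySimpa false



section Conj
variable {B B' : Type*} [CommRing B] [CommRing B'] [Algebra ℚ B] [Algebra ℚ B']

/-- conjugate a derivation by an algebra isomorphism -/
def conjDer (e : B ≃ₐ[ℚ] B') (D : Derivation ℚ B B) : Derivation ℚ B' B' where
  toLinearMap := (e.toLinearMap.comp D.toLinearMap).comp e.symm.toLinearMap
  map_one_eq_zero' := by simp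
  leibniz' := by
    intro a b
    have h : e (D (e.symm (a * b))) = a * e (D (e.symm b)) + b * e (D (e.symm a)) := by
      rw [map_mul e.symm, D.leibniz]
      simp only [smul_eq_mul, map_add, map_mul, AlgEquiv.apply_symm_apply]
    simpa [smul_eq_mul] using h

@[simp] lemma conjDer_apply (e : B ≃ₐ[ℚ] B') (D : Derivation ℚ B B) (x : B') :
    conjDer e D x = e (D (e.symm x)) := rfl

lemma conjDer_pow (e : B ≃ₐ[ℚ] B') (D : Derivation ℚ B B) (m : ℕ) (x : B') :
    ((conjDer e D).toLinearMap ^ m) x = e ((D.toLinearMap ^ m) (e.symm x)) := by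
  induction m generalizing x with
  | zero => simp
  | succ k ih =>
    rw [pow_succ, Module.End.mul_apply, pow_succ, Module.End.mul_apply]
    rw [ih]
    simp

end Conj

section derQ
variable {R : Type*} [CommRing R] [Algebra ℚ R] {n : ℕ}

noncomputable def derQ (D : Derivation R (MvPolynomial (Fin n) R) (MvPolynomial (Fin n) R)) :
    Derivation ℚ (MvPolynomial (Fin n) R) (MvPolynomial (Fin n) R) :=
  D.restrictScalars ℚ

lemma derQ_pow (D : Derivation R (MvPolynomial (Fin n) R) (MvPolynomial (Fin n) R)) (m : ℕ)
    (x : MvPolynomial (Fin n) R) :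
    ((derQ D).toLinearMap ^ m) x = (D.toLinearMap ^ m) x := by
  induction m generalizing x with
  | zero => rfl
  | succ k ih =>
    rw [pow_succ, Module.End.mul_apply, pow_succ, Module.End.mul_apply, ih]
    rfl

end derQ


section Key
variable {R : Type*} [CommRing R] [Algebra ℚ R] {n : ℕ}
variable (D : Derivation R (MvPolynomial (Fin n) R) (MvPolynomial (Fin n) R))

lemma pow_apply_zero_of_le {B : Type*} [AddCommMonoid B] {S : Type*} [Semiring S] [Module S B]
    (f : B →ₗ[S] B) {h : B} {M m : ℕ} (hM : (f ^ M) h = 0) (hm : M ≤ m) : (f ^ m) h = 0 := by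
  obtain ⟨k, rfl⟩ := Nat.exists_eq_add_of_le hm
  rw [add_comm, pow_add, Module.End.mul_apply, hM, map_zero]

lemma expMap_eq_sum {h : MvPolynomial (Fin n) R} {M : ℕ} (hM : (D.toLinearMap ^ M) h = 0) :
    expMap D h = ∑ m ∈ Finset.range M, (m.factorial : ℚ)⁻¹ • ((D.toLinearMap ^ m) h) := by
  refine finsum_eq_sum_of_support_subset _ ?_
  intro m hm
  simp only [Function.mem_support] at hm
  by_contra hmem
  simp only [Finset.coe_range, Set.mem_Iio, not_lt] at hmem
  exact hm (by rw [pow_apply_zero_of_le _ hM hmem, smul_zero])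

lemma key (hD : ∀ g, ∃ m : ℕ, (D.toLinearMap ^ m) g = 0)
    (φ : PolyAut R n) (hφ : ∀ g, φ g = expMap D g)
    (W : Submodule ℚ (MvPolynomial (Fin n) R)) (hW : ∀ w ∈ W, φ w ∈ W)
    {g : MvPolynomial (Fin n) R} (hg : g ∈ W) : D g ∈ W := by
  classical
  obtain ⟨M₀, hM₀⟩ := hD g
  set M := M₀ + 1 with hMdef
  have hM : (D.toLinearMap ^ M) g = 0 := pow_apply_zero_of_le _ hM₀ (Nat.le_succ _)
  set Dl : MvPolynomial (Fin n) R →ₗ[ℚ] MvPolynomial (Fin n) R :=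
    D.toLinearMap.restrictScalars ℚ with hDl
  have hDlpow : ∀ (m : ℕ) (x), (Dl ^ m) x = (D.toLinearMap ^ m) x := by
    intro m
    induction m with
    | zero => intro x; rfl
    | succ k ih =>
      intro x
      rw [pow_succ, Module.End.mul_apply, pow_succ, Module.End.mul_apply, ih]
      rfl
  set N : MvPolynomial (Fin n) R →ₗ[ℚ] MvPolynomial (Fin n) R :=
    φ.toLinearMap.restrictScalars ℚ - LinearMap.id with hN
  have hNapp : ∀ x, N x = φ x - x := fun x => rfl
  have hNW : ∀ w ∈ W, N w ∈ W := fun w hw => by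
    rw [hNapp]; exact sub_mem (hW w hw) hw
  -- formula for N on iterates of g
  have hNg : ∀ m : ℕ, N ((Dl ^ m) g) =
      ∑ j ∈ Finset.Ico 1 M, (j.factorial : ℚ)⁻¹ • ((Dl ^ (j + m)) g) := by
    intro m
    have hpows : ∀ j : ℕ, (D.toLinearMap ^ j) ((Dl ^ m) g) = (Dl ^ (j + m)) g := by
      intro j
      rw [hDlpow, hDlpow, pow_add, Module.End.mul_apply]
    have hzero : (D.toLinearMap ^ M) ((Dl ^ m) g) = 0 := by
      rw [hpows, hDlpow]
      exact pow_apply_zero_of_le _ hM (by omega)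
    rw [hNapp, hφ, expMap_eq_sum D hzero]
    rw [Finset.range_eq_Ico, Finset.sum_eq_sum_Ico_succ_bot (by omega : (0:ℕ) < M)]
    simp only [pow_zero, Module.End.one_apply, Nat.factorial_zero, Nat.cast_one, inv_one, one_smul]
    rw [add_sub_cancel_left]
    exact Finset.sum_congr rfl fun j _ => by rw [hpows]
  -- the filtration
  set S : ℕ → Submodule ℚ (MvPolynomial (Fin n) R) :=
    fun k => Submodule.span ℚ ((fun m => (Dl ^ m) g) '' Set.Ici k) with hS
  have hSmem : ∀ {m k : ℕ}, k ≤ m → (Dl ^ m) g ∈ S k := fun {m k} hkm =>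
    Submodule.subset_span ⟨m, hkm, rfl⟩
  have hNS : ∀ (k : ℕ) (v), v ∈ S k → N v ∈ S (k + 1) := by
    intro k v hv
    induction hv using Submodule.span_induction with
    | mem x hx =>
      obtain ⟨m, hm, rfl⟩ := hx
      simp only [Set.mem_Ici] at hm
      rw [hNg m]
      refine Submodule.sum_mem _ fun j hj => Submodule.smul_mem _ _ (hSmem ?_)
      simp only [Finset.mem_Ico] at hj
      omega
    | zero => rw [map_zero]; exact Submodule.zero_mem _
    | add x y _ _ hx hy => rw [map_add]; exact Submodule.add_mem _ hx hy
    | smul c x _ hx => rw [map_smul]; exact Submodule.smul_mem _ _ hx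
  have hstep : ∀ k : ℕ, N ((Dl ^ k) g) - (Dl ^ (k + 1)) g ∈ S (k + 2) := by
    intro k
    rcases Nat.lt_or_ge 1 M with h1M | h1M
    · rw [hNg k, Finset.sum_eq_sum_Ico_succ_bot h1M]
      simp only [Nat.factorial_one, Nat.cast_one, inv_one, one_smul]
      rw [add_comm 1 k, add_sub_cancel_left]
      refine Submodule.sum_mem _ fun j hj => Submodule.smul_mem _ _ (hSmem ?_)
      simp only [Finset.mem_Ico] at hj
      omega
    · -- M = 1, so D g = 0 and all higher iterates vanish
      have hg1 : ∀ m : ℕ, 1 ≤ m → (Dl ^ m) g = 0 := by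
        intro m hm
        rw [hDlpow]
        exact pow_apply_zero_of_le _ hM (by omega)
      rw [hNg k]
      have : ∀ j ∈ Finset.Ico 1 M, (j.factorial : ℚ)⁻¹ • ((Dl ^ (j + k)) g) = 0 := by
        intro j hj
        simp only [Finset.mem_Ico] at hj
        rw [hg1 _ (by omega), smul_zero]
      rw [Finset.sum_congr rfl this, Finset.sum_const_zero, hg1 _ (by omega), sub_zero]
      exact Submodule.zero_mem _
  have hP : ∀ k : ℕ, (N ^ k) g - (Dl ^ k) g ∈ S (k + 1) := by
    intro k
    induction k with
    | zero => simp only [pow_zero, Module.End.one_apply, sub_self]; exact Submodule.zero_mem _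
    | succ k ih =>
      have heq : (N ^ (k + 1)) g - (Dl ^ (k + 1)) g =
          N ((N ^ k) g - (Dl ^ k) g) + (N ((Dl ^ k) g) - (Dl ^ (k + 1)) g) := by
        rw [map_sub, sub_add_sub_cancel, pow_succ', Module.End.mul_apply]
      rw [heq]
      exact Submodule.add_mem _ (hNS _ _ ih) (hstep k)
  have hNpowW : ∀ k : ℕ, (N ^ k) g ∈ W := by
    intro k
    induction k with
    | zero => simpa using hg
    | succ k ih =>
      rw [pow_succ', Module.End.mul_apply]
      exact hNW _ ih
  have hdown : ∀ j : ℕ, ∀ m : ℕ, 1 ≤ m → M - j ≤ m → (Dl ^ m) g ∈ W := by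
    intro j
    induction j with
    | zero =>
      intro m _ hm
      rw [hDlpow, pow_apply_zero_of_le _ hM (by omega)]
      exact Submodule.zero_mem _
    | succ j ih =>
      intro m hm1 hmj
      by_cases hc : M - j ≤ m
      · exact ih m hm1 hc
      · have : (Dl ^ m) g = (N ^ m) g - ((N ^ m) g - (Dl ^ m) g) := by ring_nf
        rw [this]
        refine sub_mem (hNpowW m) ?_
        have hle : S (m + 1) ≤ W := by
          rw [hS]
          refine Submodule.span_le.mpr ?_
          rintro x ⟨t, ht, rfl⟩
          simp only [Set.mem_Ici] at ht
          exact ih t (by omega) (by omega)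
        exact hle (hP m)
  have : (Dl ^ 1) g ∈ W := hdown M 1 le_rfl (by omega)
  rw [hDlpow, pow_one] at this
  exact this

end Key

section PolyPart
open Polynomial Finset


section IterLeibniz
variable {C : Type*} [CommRing C] [Algebra ℚ C]

lemma derivation_iterate_mul (d : Derivation ℚ C C) (p q : C) (n : ℕ) :
    (⇑d)^[n] (p * q) =
      ∑ k ∈ range n.succ, (n.choose k • ((⇑d)^[n - k] p * (⇑d)^[k] q)) := by
  have hmul : ∀ a b : C, d (a * b) = d a * b + a * d b := by
    intro a b
    rw [d.leibniz]
    simp only [smul_eq_mul]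
    ring
  induction n with
  | zero => simp
  | succ n IH =>
    calc
      (⇑d)^[n + 1] (p * q) =
          d (∑ k ∈ range n.succ,
              n.choose k • ((⇑d)^[n - k] p * (⇑d)^[k] q)) := by
        rw [Function.iterate_succ_apply', IH]
      _ = (∑ k ∈ range n.succ,
            n.choose k • ((⇑d)^[n - k + 1] p * (⇑d)^[k] q)) +
          ∑ k ∈ range n.succ,
            n.choose k • ((⇑d)^[n - k] p * (⇑d)^[k + 1] q) := by
        rw [map_sum]
        simp_rw [map_nsmul, hmul, Function.iterate_succ_apply',
          smul_add, sum_add_distrib]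
      _ = (∑ k ∈ range n.succ,
                n.choose k.succ • ((⇑d)^[n - k] p * (⇑d)^[k + 1] q)) +
              1 • ((⇑d)^[n + 1] p * (⇑d)^[0] q) +
            ∑ k ∈ range n.succ, n.choose k • ((⇑d)^[n - k] p * (⇑d)^[k + 1] q) :=
        ?_
      _ = ((∑ k ∈ range n.succ, n.choose k • ((⇑d)^[n - k] p * (⇑d)^[k + 1] q)) +
              ∑ k ∈ range n.succ,
                n.choose k.succ • ((⇑d)^[n - k] p * (⇑d)^[k + 1] q)) +
            1 • ((⇑d)^[n + 1] p * (⇑d)^[0] q) := by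
        rw [add_comm, add_assoc]
      _ = (∑ i ∈ range n.succ,
              (n + 1).choose (i + 1) • ((⇑d)^[n + 1 - (i + 1)] p * (⇑d)^[i + 1] q)) +
            1 • ((⇑d)^[n + 1] p * (⇑d)^[0] q) := by
        simp_rw [Nat.choose_succ_succ, Nat.succ_sub_succ, add_smul, sum_add_distrib]
      _ = ∑ k ∈ range n.succ.succ,
            n.succ.choose k • ((⇑d)^[n.succ - k] p * (⇑d)^[k] q) := by
        rw [sum_range_succ' _ n.succ, Nat.choose_zero_right, tsub_zero]
    congr
    refine (sum_range_succ' _ _).trans (congr_arg₂ (· + ·) ?_ ?_)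
    · rw [sum_range_succ, Nat.choose_succ_self, zero_smul, add_zero]
      refine sum_congr rfl fun k hk => ?_
      rw [mem_range] at hk
      congr
      omega
    · rw [Nat.choose_zero_right, tsub_zero]

lemma derivation_iterate_zero (d : Derivation ℚ C C) (k : ℕ) : (⇑d)^[k] (0 : C) = 0 := by
  induction k with
  | zero => rfl
  | succ k ih => rw [Function.iterate_succ_apply', ih, map_zero]

lemma derivation_iterate_zero_stable (d : Derivation ℚ C C) {a : C} {m : ℕ}
    (h : (⇑d)^[m] a = 0) {m' : ℕ} (hm : m ≤ m') : (⇑d)^[m'] a = 0 := by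
  obtain ⟨k, rfl⟩ := Nat.exists_eq_add_of_le hm
  rw [add_comm, Function.iterate_add_apply, h, derivation_iterate_zero]

lemma nu_exists (d : Derivation ℚ C C) {a : C} (h : ∃ m, (⇑d)^[m] a = 0) (h0 : a ≠ 0) :
    ∃ s, (⇑d)^[s] a ≠ 0 ∧ (⇑d)^[s + 1] a = 0 := by
  classical
  let m := Nat.find h
  have hm : (⇑d)^[m] a = 0 := Nat.find_spec h
  have hm1 : 1 ≤ m := by
    rcases Nat.eq_zero_or_pos m with h' | h'
    · exfalso; apply h0; have := hm; rw [h'] at this; exact this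
    · exact h'
  refine ⟨m - 1, ?_, by rwa [Nat.sub_add_cancel hm1]⟩
  intro hzero
  exact Nat.find_min h (by omega : m - 1 < m) hzero

lemma nu_mul_ne_zero [IsDomain C] (d : Derivation ℚ C C) {a b : C} {s t : ℕ}
    (hs : (⇑d)^[s] a ≠ 0) (hs1 : (⇑d)^[s + 1] a = 0)
    (ht : (⇑d)^[t] b ≠ 0) (ht1 : (⇑d)^[t + 1] b = 0) :
    (⇑d)^[s + t] (a * b) ≠ 0 := by
  have hchar : CharZero C :=
    charZero_of_injective_algebraMap (algebraMap ℚ C).injective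
  have hsum : (⇑d)^[s + t] (a * b) =
      (s + t).choose t • ((⇑d)^[s] a * (⇑d)^[t] b) := by
    rw [derivation_iterate_mul]
    rw [Finset.sum_eq_single t]
    · have hst : s + t - t = s := by omega
      rw [hst]
    · intro k hk hkt
      rcases Nat.lt_or_ge k t with h' | h'
      · have : (⇑d)^[s + t - k] a = 0 :=
          derivation_iterate_zero_stable d hs1 (by omega)
        rw [this, zero_mul, smul_zero]
      · have : (⇑d)^[k] b = 0 :=
          derivation_iterate_zero_stable d ht1 (by omega)
        rw [this, mul_zero, smul_zero]
    · intro h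
      exfalso
      apply h
      rw [Finset.mem_range]
      omega
  rw [hsum]
  intro hzero
  have hne : (⇑d)^[s] a * (⇑d)^[t] b ≠ 0 := mul_ne_zero hs ht
  have hchoose : ((s + t).choose t : C) ≠ 0 := by
    exact_mod_cast Nat.cast_ne_zero.mpr (Nat.choose_pos (by omega : t ≤ s + t)).ne'
  rw [nsmul_eq_mul] at hzero
  exact hne (by
    rcases mul_eq_zero.mp hzero with h' | h'
    · exact absurd h' hchoose
    · exact h')

end IterLeibniz



section Core
variable {C : Type*} [CommRing C] [Algebra ℚ C]

/-- The derivation on `C` induced on constants by a derivation of `C[X]`. -/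
noncomputable def coeffDer (D : Derivation ℚ (Polynomial C) (Polynomial C)) :
    Derivation ℚ C C where
  toLinearMap := ((Polynomial.lcoeff C 0).restrictScalars ℚ).comp
    (D.toLinearMap.comp (IsScalarTower.toAlgHom ℚ C (Polynomial C)).toLinearMap)
  map_one_eq_zero' := by
    have : (D ((algebraMap C (Polynomial C)) 1)).coeff 0 = 0 := by
      rw [map_one, D.map_one_eq_zero, Polynomial.coeff_zero]
    exact this
  leibniz' := by
    intro a b
    have h : (D ((algebraMap C (Polynomial C)) (a * b))).coeff 0 =
        a * (D ((algebraMap C (Polynomial C)) b)).coeff 0 +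
        b * (D ((algebraMap C (Polynomial C)) a)).coeff 0 := by
      rw [map_mul, D.leibniz]
      simp only [smul_eq_mul, Polynomial.coeff_add, Polynomial.algebraMap_eq,
        Polynomial.coeff_C_mul]
    simpa [smul_eq_mul] using h

lemma coeffDer_apply (D : Derivation ℚ (Polynomial C) (Polynomial C)) (c : C) :
    coeffDer D c = (D (Polynomial.C c)).coeff 0 := by
  show (D ((algebraMap C (Polynomial C)) c)).coeff 0 = _
  rw [Polynomial.algebraMap_eq]

/-- Apply a derivation to each coefficient of a polynomial. -/
noncomputable def applyCoeff (d : Derivation ℚ C C) (h : Polynomial C) : Polynomial C :=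
  ⟨AddMonoidAlgebra.ofCoeff (Finsupp.mapRange ⇑d (map_zero d) h.toFinsupp.coeff)⟩

lemma applyCoeff_coeff (d : Derivation ℚ C C) (h : Polynomial C) (k : ℕ) :
    (applyCoeff d h).coeff k = d (h.coeff k) := by
  simp only [applyCoeff, Polynomial.coeff_ofFinsupp, Finsupp.mapRange_apply]
  rfl

lemma applyCoeff_zero (d : Derivation ℚ C C) : applyCoeff d 0 = 0 := by
  ext k; simp [applyCoeff_coeff]

lemma applyCoeff_add (d : Derivation ℚ C C) (p q : Polynomial C) :
    applyCoeff d (p + q) = applyCoeff d p + applyCoeff d q := by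
  ext k; simp [applyCoeff_coeff]

lemma applyCoeff_smul (d : Derivation ℚ C C) (c : ℚ) (p : Polynomial C) :
    applyCoeff d (c • p) = c • applyCoeff d p := by
  ext k
  simp only [applyCoeff_coeff, Polynomial.coeff_smul]
  rw [d.map_smul]

lemma applyCoeff_monomial (d : Derivation ℚ C C) (k : ℕ) (a : C) :
    applyCoeff d (monomial k a) = monomial k (d a) := by
  ext m
  simp only [applyCoeff_coeff, Polynomial.coeff_monomial]
  split
  · rfl
  · exact map_zero d

lemma applyCoeff_natDegree_le (d : Derivation ℚ C C) (p : Polynomial C) :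
    (applyCoeff d p).natDegree ≤ p.natDegree := by
  refine Polynomial.natDegree_le_iff_coeff_eq_zero.mpr fun m hm => ?_
  rw [applyCoeff_coeff, Polynomial.coeff_eq_zero_of_natDegree_lt hm, map_zero]

variable (D : Derivation ℚ (Polynomial C) (Polynomial C)) (A : Subalgebra ℚ C)

/-- Fundamental formula for a derivation of `C[X]` on polynomials with coefficients in a
`D`-stable subalgebra of constants. -/
lemma D_eq
    (hA : ∀ a ∈ A, D (Polynomial.C a) = Polynomial.C (coeffDer D a))
    {h : Polynomial C} (hh : ∀ k, h.coeff k ∈ A) :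
    D h = applyCoeff (coeffDer D) h + derivative h * D Polynomial.X := by
  have hspan : h ∈ Submodule.span ℚ {p : Polynomial C | ∃ k, ∃ a ∈ A, p = Polynomial.monomial k a} := by
    have hsum : h = ∑ i ∈ h.support, monomial i (h.coeff i) := as_sum_support h
    rw [hsum]
    exact Submodule.sum_mem _ fun i _ => Submodule.subset_span ⟨i, h.coeff i, hh i, rfl⟩
  clear hh
  induction hspan using Submodule.span_induction with
  | mem p hp =>
    obtain ⟨k, a, haA, rfl⟩ := hp
    rw [applyCoeff_monomial, Polynomial.derivative_monomial, ← Polynomial.C_mul_X_pow_eq_monomial,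
      ← Polynomial.C_mul_X_pow_eq_monomial, ← Polynomial.C_mul_X_pow_eq_monomial, D.leibniz, Derivation.leibniz_pow,
      hA a haA]
    simp only [smul_eq_mul, nsmul_eq_mul, map_mul, map_natCast]
    ring
  | zero => rw [map_zero, applyCoeff_zero, derivative_zero, zero_mul, add_zero]
  | add p q _ _ hp hq =>
    rw [map_add, applyCoeff_add, derivative_add, hp, hq, add_mul]
    ring
  | smul c p _ hp =>
    rw [D.map_smul, applyCoeff_smul, derivative_smul, hp, smul_add, smul_mul_assoc]

lemma coeffs_D_mem
    (hA : ∀ a ∈ A, coeffDer D a ∈ A ∧ D (Polynomial.C a) = Polynomial.C (coeffDer D a))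
    (hf : ∀ k, (D Polynomial.X).coeff k ∈ A)
    {h : Polynomial C} (hh : ∀ k, h.coeff k ∈ A) : ∀ k, (D h).coeff k ∈ A := by
  intro k
  rw [D_eq D A (fun a ha => (hA a ha).2) hh, Polynomial.coeff_add, applyCoeff_coeff]
  refine add_mem ((hA _ (hh k)).1) ?_
  rw [Polynomial.coeff_mul]
  refine sum_mem fun x _ => mul_mem ?_ (hf x.2)
  rw [Polynomial.coeff_derivative]
  have h2 : ((x.1 : C) + 1) ∈ A := by exact_mod_cast Subalgebra.natCast_mem A (x.1 + 1)
  exact mul_mem (hh (x.1 + 1)) h2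

end Core



section CoreThm
variable {C : Type*} [CommRing C] [IsDomain C] [Algebra ℚ C]
variable (D : Derivation ℚ (Polynomial C) (Polynomial C)) (A : Subalgebra ℚ C)

lemma iterate_C_mem
    (hA : ∀ a ∈ A, coeffDer D a ∈ A ∧ D (Polynomial.C a) = Polynomial.C (coeffDer D a))
    {a : C} (ha : a ∈ A) (m : ℕ) :
    (⇑D)^[m] (Polynomial.C a) = Polynomial.C ((⇑(coeffDer D))^[m] a) ∧
      (⇑(coeffDer D))^[m] a ∈ A := by
  induction m with
  | zero => exact ⟨rfl, ha⟩
  | succ m ih =>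
    rw [Function.iterate_succ_apply', Function.iterate_succ_apply', ih.1]
    exact ⟨(hA _ ih.2).2, (hA _ ih.2).1⟩

theorem corePoly
    (hD : ∀ g, ∃ m, (⇑D)^[m] g = 0)
    (hA : ∀ a ∈ A, coeffDer D a ∈ A ∧ D (Polynomial.C a) = Polynomial.C (coeffDer D a))
    (hf : ∀ k, (D Polynomial.X).coeff k ∈ A) :
    (D Polynomial.X).natDegree = 0 := by
  haveI : CharZero C := charZero_of_injective_algebraMap (algebraMap ℚ C).injective
  by_contra hd0
  set f := D Polynomial.X with hfdef
  set df := f.natDegree with hdf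
  have hfne : f ≠ 0 := by
    intro h
    apply hd0
    rw [hdf, h, natDegree_zero]
  set dd := coeffDer D with hdd
  -- nilpotency of dd on A
  have hdnil : ∀ a ∈ A, ∃ m, (⇑dd)^[m] a = 0 := by
    intro a ha
    obtain ⟨m, hm⟩ := hD (Polynomial.C a)
    refine ⟨m, ?_⟩
    have := (iterate_C_mem D A hA ha m).1
    rw [this] at hm
    exact (Polynomial.C_eq_zero).mp hm
  rcases Nat.lt_or_ge 1 df with hd2 | hd1
  · -- degree ≥ 2 : degrees grow
    have key2 : ∀ m : ℕ, (∀ k, ((⇑D)^[m + 1] Polynomial.X).coeff k ∈ A) ∧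
        ((⇑D)^[m + 1] Polynomial.X).natDegree = 1 + (m + 1) * (df - 1) := by
      intro m
      induction m with
      | zero =>
        rw [Function.iterate_one]
        refine ⟨hf, ?_⟩
        rw [← hfdef]
        omega
      | succ m ih =>
        set h := (⇑D)^[m + 1] Polynomial.X with hh
        obtain ⟨ihA, ihdeg⟩ := ih
        have hDh : D h = applyCoeff dd h + derivative h * f :=
          D_eq D A (fun a ha => (hA a ha).2) ihA
        have hnext : (⇑D)^[m + 1 + 1] Polynomial.X = D h := Function.iterate_succ_apply' _ _ _
        have hcoefs : ∀ k, (D h).coeff k ∈ A :=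
          coeffs_D_mem D A hA hf ihA
        set e := h.natDegree with he
        have he1 : 1 ≤ e := by
          have := Nat.mul_pos (Nat.succ_pos m) (show 0 < df - 1 by omega)
          omega
        have hhne : h ≠ 0 := by
          intro h0
          rw [h0, natDegree_zero] at he
          omega
        have hlc : h.coeff e ≠ 0 := by
          rw [he]
          exact Polynomial.leadingCoeff_ne_zero.mpr hhne
        have hdercoeff : (derivative h).coeff (e - 1) ≠ 0 := by
          rw [Polynomial.coeff_derivative]
          have hsub : e - 1 + 1 = e := by omega
          rw [hsub]
          refine mul_ne_zero hlc ?_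
          have h3 : ((e - 1 : ℕ) : C) + 1 = ((e : ℕ) : C) := by
            exact_mod_cast congrArg (Nat.cast : ℕ → C) (by omega : e - 1 + 1 = e)
          rw [h3]
          exact Nat.cast_ne_zero.mpr (by omega)
        have hderne : derivative h ≠ 0 := fun h0 => hdercoeff (by rw [h0, Polynomial.coeff_zero])
        have hderdeg : (derivative h).natDegree = e - 1 :=
          le_antisymm (natDegree_derivative_le h) (le_natDegree_of_ne_zero hdercoeff)
        have hmuldeg : (derivative h * f).natDegree = e - 1 + df := by
          rw [Polynomial.natDegree_mul hderne hfne, hderdeg]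
        have hacdeg : (applyCoeff dd h).natDegree ≤ e := applyCoeff_natDegree_le dd h
        have hlt : (applyCoeff dd h).natDegree < (derivative h * f).natDegree := by
          rw [hmuldeg]
          exact lt_of_le_of_lt hacdeg (by omega : e < e - 1 + df)
        have hdeg : (D h).natDegree = e - 1 + df := by
          rw [hDh, Polynomial.natDegree_add_eq_right_of_natDegree_lt hlt, hmuldeg]
        refine ⟨by rw [hnext]; exact hcoefs, ?_⟩
        rw [hnext, hdeg]
        have hmul2 : (m + 1 + 1) * (df - 1) = (m + 1) * (df - 1) + (df - 1) := by ring
        omega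
    obtain ⟨m, hm⟩ := hD Polynomial.X
    have hzero : (⇑D)^[m + 1] Polynomial.X = 0 := by
      rw [Function.iterate_succ_apply', hm, map_zero]
    have := (key2 m).2
    rw [hzero, natDegree_zero] at this
    have hpos : (0:ℕ) < (m + 1) * (df - 1) :=
      Nat.mul_pos (Nat.succ_pos m) (by omega)
    omega
  · -- degree exactly 1
    have hd1' : df = 1 := by omega
    set f1 := f.coeff 1 with hf1
    set f0 := f.coeff 0 with hf0
    have hfX : f = Polynomial.C f1 * Polynomial.X + Polynomial.C f0 :=
      eq_X_add_C_of_natDegree_le_one (by omega)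
    have hf1ne : f1 ≠ 0 := by
      have : f.coeff df ≠ 0 := by
        rw [hdf]
        exact Polynomial.leadingCoeff_ne_zero.mpr hfne
      rwa [hd1'] at this
    have hf1A : f1 ∈ A := hf 1
    have hf0A : f0 ∈ A := hf 0
    -- key nonvanishing step
    have hstep : ∀ a ∈ A, a ≠ 0 → a * f1 + dd a ≠ 0 := by
      intro a haA ha0 heq
      have heq' : a * f1 = -(dd a) := by linear_combination heq
      obtain ⟨s, hs, hs1⟩ := nu_exists dd (hdnil a haA) ha0
      obtain ⟨t, ht, ht1⟩ := nu_exists dd (hdnil f1 hf1A) hf1ne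
      refine nu_mul_ne_zero dd hs hs1 ht ht1 ?_
      rw [heq']
      have hneg : ∀ (k : ℕ) (x : C), (⇑dd)^[k] (-x) = -((⇑dd)^[k] x) := by
        intro k
        induction k with
        | zero => intro x; rfl
        | succ k ih =>
          intro x
          rw [Function.iterate_succ_apply', Function.iterate_succ_apply', ih, map_neg]
      rw [hneg]
      have : (⇑dd)^[s + t] (dd a) = (⇑dd)^[s + t + 1] a := by
        rw [Function.iterate_succ_apply]
      rw [this, derivation_iterate_zero_stable dd hs1 (by omega), neg_zero]
    -- main induction: D^[m+1] X = C a ⬝ X + C b with a ≠ 0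
    have claim : ∀ m : ℕ, ∃ a b : C, a ∈ A ∧ b ∈ A ∧ a ≠ 0 ∧
        (⇑D)^[m + 1] Polynomial.X = Polynomial.C a * Polynomial.X + Polynomial.C b := by
      intro m
      induction m with
      | zero => exact ⟨f1, f0, hf1A, hf0A, hf1ne, by rw [Function.iterate_one]; exact hfX⟩
      | succ m ih =>
        obtain ⟨a, b, haA, hbA, ha0, hrep⟩ := ih
        refine ⟨a * f1 + dd a, a * f0 + dd b, ?_, ?_, hstep a haA ha0, ?_⟩
        · exact add_mem (mul_mem haA hf1A) (hA a haA).1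
        · exact add_mem (mul_mem haA hf0A) (hA b hbA).1
        · rw [Function.iterate_succ_apply', hrep]
          rw [map_add, D.leibniz]
          rw [(hA a haA).2, (hA b hbA).2, ← hfdef]
          rw [hfX]
          simp only [smul_eq_mul, map_add, map_mul]
          ring
    obtain ⟨m, hm⟩ := hD Polynomial.X
    have hzero : (⇑D)^[m + 1] Polynomial.X = 0 := by
      rw [Function.iterate_succ_apply', hm, map_zero]
    obtain ⟨a, b, _, _, ha0, hrep⟩ := claim m
    rw [hzero] at hrep
    apply ha0
    have := congrArg (fun p => Polynomial.coeff p 1) hrep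
    simpa [Polynomial.coeff_C] using this.symm

end CoreThm
end PolyPart



section Transport
variable {R : Type*} [CommRing R] [IsDomain R] [Algebra ℚ R] {n : ℕ}
variable (D : Derivation R (MvPolynomial (Fin n) R) (MvPolynomial (Fin n) R))

/-- A derivation maps a `supported` subalgebra into itself as soon as it does so on the
generating variables. -/
lemma D_stable (s : Set (Fin n)) (hs : ∀ j ∈ s, D (X j) ∈ supported R s) :
    ∀ x ∈ supported R s, D x ∈ supported R s := by
  intro x hx
  rw [supported_eq_adjoin_X] at hx
  induction hx using Algebra.adjoin_induction with
  | mem y hy =>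
    obtain ⟨j, hj, rfl⟩ := hy
    exact hs j hj
  | algebraMap r => rw [Derivation.map_algebraMap]; exact Subalgebra.zero_mem _
  | add y z hy hz ihy ihz => rw [map_add]; exact Subalgebra.add_mem _ ihy ihz
  | mul y z hy hz ihy ihz =>
    rw [D.leibniz, smul_eq_mul, smul_eq_mul]
    rw [← supported_eq_adjoin_X] at hy hz
    exact Subalgebra.add_mem _ (Subalgebra.mul_mem _ hy ihz) (Subalgebra.mul_mem _ hz ihy)

/-- Strict triangularity from weak triangularity, for a locally nilpotent derivation. -/
lemma strict_of_weak (hD : ∀ g, ∃ m : ℕ, (D.toLinearMap ^ m) g = 0)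
    (hweak : ∀ j : Fin n, D (X j) ∈ supported R {k | k ≤ j}) (i : Fin n) :
    D (X i) ∈ supported R {j | j < i} := by
  classical
  set σ' := {j : Fin n // j ≠ i} with hσ'
  set Cr := MvPolynomial σ' R with hCr
  set e0 : Option σ' ≃ Fin n := Equiv.optionSubtypeNe i with he0
  set E : MvPolynomial (Fin n) R ≃ₐ[R] Polynomial Cr :=
    (renameEquiv R e0.symm).trans (optionEquivLeft R σ') with hE
  have hEXi : E (X i) = Polynomial.X := by
    rw [hE]
    simp only [AlgEquiv.trans_apply, renameEquiv_apply, rename_X]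
    rw [he0, Equiv.optionSubtypeNe_symm_self, optionEquivLeft_X_none]
  have hEXj : ∀ (j : Fin n) (h : j ≠ i), E (X j) = Polynomial.C (X ⟨j, h⟩) := by
    intro j h
    rw [hE]
    simp only [AlgEquiv.trans_apply, renameEquiv_apply, rename_X]
    rw [he0, Equiv.optionSubtypeNe_symm_of_ne h, optionEquivLeft_X_some]
  set Eq : MvPolynomial (Fin n) R ≃ₐ[ℚ] Polynomial Cr := AlgEquiv.restrictScalars ℚ E with hEq
  have hEqc : ∀ x, Eq x = E x := fun _ => rfl
  have hEqs : ∀ x, Eq.symm x = E.symm x := fun _ => rfl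
  set D' : Derivation ℚ (Polynomial Cr) (Polynomial Cr) := conjDer Eq (derQ D) with hD'
  have hD'app : ∀ x, D' x = E (D (E.symm x)) := fun x => rfl
  have hD'nil : ∀ g, ∃ m : ℕ, (⇑D')^[m] g = 0 := by
    intro g
    obtain ⟨m, hm⟩ := hD (E.symm g)
    refine ⟨m, ?_⟩
    have h1 : (⇑D')^[m] g = (D'.toLinearMap ^ m) g := by
      rw [Module.End.pow_apply]
      rfl
    rw [h1, hD', conjDer_pow, derQ_pow]
    rw [hEqs, hm, map_zero]
  set sOut : Set σ' := {u : σ' | (u : Fin n) < i} with hsOut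
  set A_R : Subalgebra R Cr := supported R sOut with hA_R
  set A : Subalgebra ℚ Cr := Subalgebra.restrictScalars ℚ A_R with hA
  have hmemA : ∀ a : Cr, a ∈ A ↔ a ∈ A_R := fun a => Iff.rfl
  -- polynomials with all coefficients in `A_R`
  set SA : Subalgebra R (Polynomial Cr) :=
    { carrier := {p | ∀ k, p.coeff k ∈ A_R}
      mul_mem' := by
        intro p q hp hq k
        rw [Polynomial.coeff_mul]
        exact sum_mem fun x _ => Subalgebra.mul_mem _ (hp x.1) (hq x.2)
      one_mem' := by
        intro k
        rw [Polynomial.coeff_one]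
        split
        · exact Subalgebra.one_mem _
        · exact Subalgebra.zero_mem _
      add_mem' := by
        intro p q hp hq k
        rw [Polynomial.coeff_add]
        exact Subalgebra.add_mem _ (hp k) (hq k)
      zero_mem' := by
        intro k
        rw [Polynomial.coeff_zero]
        exact Subalgebra.zero_mem _
      algebraMap_mem' := by
        intro r k
        have : (algebraMap R (Polynomial Cr)) r = Polynomial.C (algebraMap R Cr r) := by
          rw [← Polynomial.algebraMap_eq, ← IsScalarTower.algebraMap_apply]
        rw [this, Polynomial.coeff_C]
        split
        · exact Subalgebra.algebraMap_mem _ _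
        · exact Subalgebra.zero_mem _ } with hSA
  have hmemSA : ∀ p : Polynomial Cr, p ∈ SA ↔ ∀ k, p.coeff k ∈ A_R := fun p => Iff.rfl
  -- image of A_R under Polynomial.C, as a subalgebra
  set ψC : Cr →ₐ[R] Polynomial Cr := IsScalarTower.toAlgHom R Cr (Polynomial Cr) with hψC
  have hψCapp : ∀ c : Cr, ψC c = Polynomial.C c := by
    intro c
    rw [hψC]
    show algebraMap Cr (Polynomial Cr) c = _
    rw [Polynomial.algebraMap_eq]
  set CA : Subalgebra R (Polynomial Cr) := A_R.map ψC with hCA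
  have hmemCA : ∀ p : Polynomial Cr, p ∈ CA → ∃ a ∈ A_R, p = Polynomial.C a := by
    intro p hp
    obtain ⟨a, ha, hap⟩ := Subalgebra.mem_map.mp hp
    exact ⟨a, ha, by rw [← hap, hψCapp]⟩
  have hmemCA' : ∀ a ∈ A_R, Polynomial.C a ∈ CA := by
    intro a ha
    exact Subalgebra.mem_map.mpr ⟨a, ha, (hψCapp a).symm⟩
  -- T1 : E maps supported {≤ i} to SA
  have hT1 : ∀ x ∈ supported R ({k | k ≤ i} : Set (Fin n)), E x ∈ SA := by
    have hle : supported R ({k | k ≤ i} : Set (Fin n)) ≤ SA.comap E.toAlgHom := by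
      rw [supported_eq_adjoin_X]
      apply Algebra.adjoin_le
      rintro _ ⟨j, hj, rfl⟩
      have hji : j ≤ i := hj
      rw [SetLike.mem_coe, Subalgebra.mem_comap]
      show E (X j) ∈ SA
      by_cases hcase : j = i
      · subst hcase
        rw [hEXi, hmemSA]
        intro k
        rw [Polynomial.coeff_X]
        split
        · exact Subalgebra.one_mem _
        · exact Subalgebra.zero_mem _
      · rw [hEXj j hcase, hmemSA]
        intro k
        rw [Polynomial.coeff_C]
        split
        · exact (X_mem_supported (R := R)).mpr (lt_of_le_of_ne hji hcase)
        · exact Subalgebra.zero_mem _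
    intro x hx
    exact hle hx
  -- T2 : E maps supported {< i} into constants with value in A_R
  have hT2 : ∀ x ∈ supported R ({j | j < i} : Set (Fin n)), E x ∈ CA := by
    have hle : supported R ({j | j < i} : Set (Fin n)) ≤ CA.comap E.toAlgHom := by
      rw [supported_eq_adjoin_X]
      apply Algebra.adjoin_le
      rintro _ ⟨j, hj, rfl⟩
      have hji : j < i := hj
      rw [SetLike.mem_coe, Subalgebra.mem_comap]
      show E (X j) ∈ CA
      rw [hEXj j (ne_of_lt hji)]
      exact hmemCA' _ ((X_mem_supported (R := R)).mpr hji)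
    intro x hx
    exact hle hx
  -- T3 : E.symm maps constants with value in A_R into supported {< i}
  have hT3 : ∀ a ∈ A_R, E.symm (Polynomial.C a) ∈ supported R ({j | j < i} : Set (Fin n)) := by
    set ψ : Cr →ₐ[R] MvPolynomial (Fin n) R := (E.symm.toAlgHom.comp ψC) with hψ
    have hψapp : ∀ c : Cr, ψ c = E.symm (Polynomial.C c) := by
      intro c
      rw [hψ, AlgHom.comp_apply, hψCapp]
      rfl
    have hle : A_R ≤ (supported R ({j | j < i} : Set (Fin n))).comap ψ := by
      rw [hA_R, supported_eq_adjoin_X]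
      apply Algebra.adjoin_le
      rintro _ ⟨u, hu, rfl⟩
      rw [SetLike.mem_coe, Subalgebra.mem_comap, hψapp]
      have : Polynomial.C (X u) = E (X (u : Fin n)) := (hEXj (u : Fin n) u.2).symm
      rw [this, AlgEquiv.symm_apply_apply]
      exact (X_mem_supported (R := R)).mpr hu
    intro a ha
    have := hle ha
    rwa [Subalgebra.mem_comap, hψapp] at this
  -- stability of supported {< i} under D
  have hstab : ∀ x ∈ supported R ({j | j < i} : Set (Fin n)),
      D x ∈ supported R ({j | j < i} : Set (Fin n)) := by
    refine D_stable D _ fun j hj => ?_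
    exact supported_mono (fun k (hk : k ≤ j) => lt_of_le_of_lt hk hj) (hweak j)
  -- hypotheses of corePoly
  have hEsymmX : E.symm Polynomial.X = X i := by
    rw [← hEXi, AlgEquiv.symm_apply_apply]
  have hD'X : D' Polynomial.X = E (D (X i)) := by
    rw [hD'app, hEsymmX]
  have hfcoeffs : ∀ k, (D' Polynomial.X).coeff k ∈ A := by
    intro k
    rw [hD'X, hmemA]
    exact (hmemSA _).mp (hT1 _ (hweak i)) k
  have hAstab : ∀ a ∈ A, coeffDer D' a ∈ A ∧
      D' (Polynomial.C a) = Polynomial.C (coeffDer D' a) := by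
    intro a ha
    rw [hmemA] at ha
    have hx : E.symm (Polynomial.C a) ∈ supported R ({j | j < i} : Set (Fin n)) := hT3 a ha
    have hDx := hstab _ hx
    have hECA : D' (Polynomial.C a) ∈ CA := by
      rw [hD'app]
      exact hT2 _ hDx
    obtain ⟨b, hbA, hb⟩ := hmemCA _ hECA
    have hcoeff : coeffDer D' a = b := by
      rw [coeffDer_apply, hb, Polynomial.coeff_C_zero]
    constructor
    · rw [hcoeff, hmemA]; exact hbA
    · rw [hb, hcoeff]
  -- apply the core result
  have hdeg : (D' Polynomial.X).natDegree = 0 := corePoly D' A hD'nil hAstab hfcoeffs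
  have heqC : D' Polynomial.X = Polynomial.C ((D' Polynomial.X).coeff 0) :=
    Polynomial.eq_C_of_natDegree_eq_zero hdeg
  have hc0 : (D' Polynomial.X).coeff 0 ∈ A_R := by
    have := hfcoeffs 0
    rwa [hmemA] at this
  have hfinal : D (X i) = E.symm (Polynomial.C ((D' Polynomial.X).coeff 0)) := by
    rw [← heqC, hD'X, AlgEquiv.symm_apply_apply]
  rw [hfinal]
  exact hT3 _ hc0

end Transport


section PartTwo
variable {R : Type*} [CommRing R] [IsDomain R] [Algebra ℚ R] {n : ℕ}

lemma single_classify {μ : Fin n →₀ ℕ} (h : (μ.sum fun _ e => e) ≤ 1) :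
    μ = 0 ∨ ∃ j, μ = Finsupp.single j 1 := by
  classical
  by_cases h0 : μ = 0
  · exact Or.inl h0
  right
  obtain ⟨j, hj⟩ := Finsupp.support_nonempty_iff.mpr h0
  have hj' : μ j ≠ 0 := Finsupp.mem_support_iff.mp hj
  have hS : (μ.sum fun _ e => e) = ∑ k ∈ μ.support, μ k := rfl
  have hle : μ j ≤ ∑ k ∈ μ.support, μ k :=
    Finset.single_le_sum (fun k _ => Nat.zero_le _) hj
  have hμj : μ j = 1 := by omega
  refine ⟨j, Finsupp.ext fun k => ?_⟩
  by_cases hkj : k = j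
  · subst hkj; rw [Finsupp.single_eq_same, hμj]
  · rw [Finsupp.single_eq_of_ne' (Ne.symm hkj)]
    by_contra hk0
    have hk : k ∈ μ.support := Finsupp.mem_support_iff.mpr hk0
    have hsub : ({j, k} : Finset (Fin n)) ⊆ μ.support := by
      intro x hx
      rcases Finset.mem_insert.mp hx with rfl | hx
      · exact hj
      · rw [Finset.mem_singleton.mp hx]; exact hk
    have hpair : ∑ x ∈ ({j, k} : Finset (Fin n)), μ x ≤ ∑ x ∈ μ.support, μ x :=
      Finset.sum_le_sum_of_subset hsub
    rw [Finset.sum_pair (Ne.symm hkj)] at hpair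
    omega

lemma affine_inv {φ : PolyAut R n} (haff : IsAffineAut φ)
    {w : MvPolynomial (Fin n) R} (hw : w.totalDegree ≤ 1) : (φ w).totalDegree ≤ 1 := by
  obtain ⟨a, b, -, hab⟩ := haff
  have hXj : ∀ j, (φ (X j)).totalDegree ≤ 1 := by
    intro j
    rw [hab j]
    refine le_trans (totalDegree_add _ _) (max_le ?_ ?_)
    · refine le_trans (totalDegree_finset_sum _ _) (Finset.sup_le fun k _ => ?_)
      refine le_trans (totalDegree_mul _ _) ?_
      rw [totalDegree_C, totalDegree_X]
    · rw [totalDegree_C]; omega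
  have hCc : ∀ c : R, φ (C c) = C c := by
    intro c
    have h1 : (C c : MvPolynomial (Fin n) R) = algebraMap R _ c := rfl
    rw [h1, AlgEquiv.commutes]
  have hw' : φ w = ∑ μ ∈ w.support, φ (monomial μ (coeff μ w)) := by
    rw [← map_sum, support_sum_monomial_coeff]
  rw [hw']
  refine le_trans (totalDegree_finset_sum _ _) (Finset.sup_le fun μ hμ => ?_)
  have hdeg : (μ.sum fun _ e => e) ≤ 1 := le_trans (le_totalDegree hμ) hw
  rcases single_classify hdeg with h0 | ⟨j, hj⟩
  · subst h0
    rw [monomial_zero', hCc, totalDegree_C]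
    omega
  · subst hj
    have hmono : (monomial (Finsupp.single j 1)) (coeff (Finsupp.single j 1) w) =
        C (coeff (Finsupp.single j 1) w) * X j := by
      rw [X, C_mul_monomial, mul_one]
    rw [hmono, map_mul, hCc]
    refine le_trans (totalDegree_mul _ _) ?_
    rw [totalDegree_C]
    simpa using hXj j

end PartTwo


/-- For a locally nilpotent derivation `D` of `R[x_1,…,x_n]` over a `ℚ`-domain `R`:
(i) if `exp D` belongs to `J(R; x_1,…,x_n)` (it maps each `R[x_1,…,x_l]` into itself),
then `D` is triangular; (ii) if `exp D` is affine, then `D` is affine. -/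
theorem statement8 {R : Type*} [CommRing R] [IsDomain R] [Algebra ℚ R]
    {n : ℕ} (hn : 1 ≤ n)
    (D : Derivation R (MvPolynomial (Fin n) R) (MvPolynomial (Fin n) R))
    (hD : ∀ g, ∃ m : ℕ, (D.toLinearMap ^ m) g = 0) :
    ((∃ φ : PolyAut R n, (∀ g, φ g = expMap D g) ∧
        ∀ i : Fin n, φ (X i) ∈ Algebra.adjoin R
          ((fun j : Fin n => (X j : MvPolynomial (Fin n) R)) '' {j : Fin n | j ≤ i})) →
      ∀ i : Fin n, D (X i) ∈ Algebra.adjoin R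
        ((fun j : Fin n => (X j : MvPolynomial (Fin n) R)) '' {j : Fin n | j < i})) ∧
    ((∃ φ : PolyAut R n, (∀ g, φ g = expMap D g) ∧ IsAffineAut φ) →
      ∀ i : Fin n, (D (X i)).totalDegree ≤ 1) := by
  constructor
  · rintro ⟨φ, hφ, hJ⟩ i
    have hweak : ∀ j : Fin n, D (X j) ∈ supported R {k | k ≤ j} := by
      intro j
      have hXmem : (X j : MvPolynomial (Fin n) R) ∈ supported R {k | k ≤ j} :=
        X_mem_supported.mpr (le_refl j)
      let W : Submodule ℚ (MvPolynomial (Fin n) R) :=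
        Submodule.restrictScalars ℚ (Subalgebra.toSubmodule (supported R {k | k ≤ j}))
      have hmemW : ∀ x, x ∈ W ↔ x ∈ supported R {k | k ≤ j} := fun x => Iff.rfl
      refine (hmemW _).mp (key D hD φ hφ W ?_ ((hmemW _).mpr hXmem))
      intro w hw
      rw [hmemW] at hw ⊢
      have hsub : supported R ({k | k ≤ j} : Set (Fin n)) ≤
          (supported R ({k | k ≤ j} : Set (Fin n))).comap φ.toAlgHom := by
        nth_rewrite 1 [supported_eq_adjoin_X]
        apply Algebra.adjoin_le
        rintro _ ⟨k, hk, rfl⟩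
        rw [SetLike.mem_coe, Subalgebra.mem_comap]
        show φ (X k) ∈ _
        have hJk : φ (X k) ∈ supported R {l | l ≤ k} := hJ k
        exact supported_mono (fun l (hl : l ≤ k) => le_trans hl hk) hJk
      exact hsub hw
    exact strict_of_weak D hD hweak i
  · rintro ⟨φ, hφ, haff⟩ i
    let W : Submodule ℚ (MvPolynomial (Fin n) R) :=
      Submodule.restrictScalars ℚ (restrictTotalDegree (Fin n) R 1)
    have hmemW : ∀ x : MvPolynomial (Fin n) R, x ∈ W ↔ x.totalDegree ≤ 1 := fun x =>
      mem_restrictTotalDegree (σ := Fin n) (m := 1) (p := x)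
    have hXW : (X i : MvPolynomial (Fin n) R) ∈ W := (hmemW _).mpr (by rw [totalDegree_X])
    have hres := key D hD φ hφ W
      (fun w hw => (hmemW _).mpr (affine_inv haff ((hmemW _).mp hw))) hXW
    exact (hmemW _).mp hres
end

section
/- Let R be an integral domain containing ℤ, K its field of fractions, and S an over-domain of R (a domain containing R as a subring). If f ∈ R[x_1,x_2] is a coordinate of S[x_1,x_2] over S, then f is a coordinate of K[x_1,x_2] over K. -/
open MvPolynomial

noncomputable section

namespace Aux13

variable {A B : Type*} [CommRing A] [CommRing B]

/-- The Jacobian-type derivation attached to `f`. -/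
def Dd (f h : MvPolynomial (Fin 2) A) : MvPolynomial (Fin 2) A :=
  pderiv 0 f * pderiv 1 h - pderiv 1 f * pderiv 0 h

lemma Dd_sub (f h h' : MvPolynomial (Fin 2) A) :
    Dd f (h - h') = Dd f h - Dd f h' := by
  simp only [Dd, map_sub]; ring

lemma Dd_mul_C (f h : MvPolynomial (Fin 2) A) (b : A) :
    Dd f (h * C b) = Dd f h * C b := by
  simp only [Dd, pderiv_mul, pderiv_C, mul_zero, add_zero]; ring

lemma Dd_C_mul (f h : MvPolynomial (Fin 2) A) (b : A) :
    Dd f (C b * h) = C b * Dd f h := by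
  rw [mul_comm, Dd_mul_C, mul_comm]

lemma map_Dd (k : A →+* B) (f h : MvPolynomial (Fin 2) A) :
    map k (Dd f h) = Dd (map k f) (map k h) := by
  simp only [Dd, map_sub, map_mul, pderiv_map]

/-- Chain rule for substitution into two-variable polynomials. -/
lemma pderiv_aeval (i : Fin 2) (g : Fin 2 → MvPolynomial (Fin 2) A)
    (p : MvPolynomial (Fin 2) A) :
    pderiv i (aeval g p) =
      aeval g (pderiv 0 p) * pderiv i (g 0) + aeval g (pderiv 1 p) * pderiv i (g 1) := by
  induction p using MvPolynomial.induction_on with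
  | C a => simp
  | add p q hp hq =>
      simp only [map_add]
      rw [hp, hq]; ring
  | mul_X p j hp =>
      have h2 : ∀ m : Fin 2, pderiv m (p * X j) = pderiv m p * X j + p * pderiv m (X j) := by
        intro m; rw [pderiv_mul]
      simp only [map_mul, aeval_X, h2, map_add, pderiv_mul, hp]
      fin_cases j <;>
        simp [pderiv_X_self, pderiv_X_of_ne, Fin.ext_iff] <;> ring

lemma Dd_aeval (g : Fin 2 → MvPolynomial (Fin 2) A) (p : MvPolynomial (Fin 2) A) :
    Dd (g 0) (aeval g p) = aeval g (pderiv 1 p) * Dd (g 0) (g 1) := by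
  simp only [Dd, pderiv_aeval]; ring

section part2

variable {A : Type*} [CommRing A]

lemma coeff_pderiv (i : Fin 2) (m : Fin 2 →₀ ℕ) (p : MvPolynomial (Fin 2) A) :
    coeff m (pderiv i p) = ((m i + 1 : ℕ) : A) * coeff (m + Finsupp.single i 1) p := by
  induction p using MvPolynomial.induction_on' with
  | monomial m' a =>
      rw [pderiv_monomial, coeff_monomial, coeff_monomial]
      by_cases h : m' = m + Finsupp.single i 1
      · subst h
        have h1 : m + Finsupp.single i 1 - Finsupp.single i 1 = m :=
          add_tsub_cancel_right m (Finsupp.single i 1)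
        rw [if_pos h1, Finsupp.add_apply, Finsupp.single_eq_same]
        simp only [if_true]
        push_cast; ring
      · rw [if_neg h]
        by_cases h0 : m' i = 0
        · by_cases h3 : m' - Finsupp.single i 1 = m
          · rw [if_pos h3, h0]; simp
          · rw [if_neg h3]; ring
        · have h3 : m' - Finsupp.single i 1 ≠ m := by
            intro hc
            apply h
            ext j
            by_cases hj : j = i
            · subst hj
              have := DFunLike.congr_fun hc j
              simp only [Finsupp.tsub_apply, Finsupp.single_eq_same] at this
              simp only [Finsupp.add_apply, Finsupp.single_eq_same]
              omega
            · have := DFunLike.congr_fun hc j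
              simp only [Finsupp.tsub_apply,
                Finsupp.single_eq_of_ne' (fun hh => hj hh.symm)] at this
              simp only [Finsupp.add_apply,
                Finsupp.single_eq_of_ne' (fun hh => hj hh.symm)]
              omega
          rw [if_neg h3]; ring
  | add p q hp hq =>
      simp only [map_add, coeff_add, hp, hq]; ring

lemma iterate_pderiv_zero_of_lt :
    ∀ (n : ℕ) (p : MvPolynomial (Fin 2) A),
      (∀ m ∈ p.support, m 1 < n) → (fun q => pderiv (1 : Fin 2) q)^[n] p = 0 := by
  intro n
  induction n with
  | zero =>
      intro p hp
      simp only [Function.iterate_zero, id_eq]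
      by_contra h
      obtain ⟨m, hm⟩ := (support_nonempty.mpr h).exists_mem
      exact absurd (hp m hm) (by omega)
  | succ n ih =>
      intro p hp
      rw [Function.iterate_succ_apply]
      apply ih
      intro m hm
      rw [mem_support_iff, coeff_pderiv] at hm
      have h2 : coeff (m + Finsupp.single 1 1) p ≠ 0 := by
        intro h0; rw [h0, mul_zero] at hm; exact hm rfl
      have := hp _ (mem_support_iff.mpr h2)
      simp only [Finsupp.add_apply, Finsupp.single_eq_same] at this
      omega

lemma exists_iterate_pderiv_zero (p : MvPolynomial (Fin 2) A) :
    ∃ n, (fun q => pderiv (1 : Fin 2) q)^[n] p = 0 := by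
  classical
  refine ⟨(p.support.sup fun m => m 1) + 1, iterate_pderiv_zero_of_lt _ p fun m hm => ?_⟩
  exact Nat.lt_succ_of_le (Finset.le_sup (f := fun m => m 1) hm)

end part2

section part3

variable {K : Type*} [Field K] [CharZero K]

/-- Integration with respect to the second variable, in characteristic zero. -/
lemma exists_pderiv_eq (p : MvPolynomial (Fin 2) K) :
    ∃ P : MvPolynomial (Fin 2) K, pderiv 1 P = p := by
  induction p using MvPolynomial.induction_on' with
  | monomial m a =>
      refine ⟨monomial (m + Finsupp.single 1 1) (a / ((m 1 : K) + 1)), ?_⟩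
      rw [pderiv_monomial, add_tsub_cancel_right, Finsupp.add_apply, Finsupp.single_eq_same]
      congr 1
      have hne : ((m 1 : K) + 1) ≠ 0 := by
        have := Nat.cast_add_one_ne_zero (R := K) (m 1); exact this
      push_cast
      field_simp
  | add p q hp hq =>
      obtain ⟨P, hP⟩ := hp; obtain ⟨Q, hQ⟩ := hq
      exact ⟨P + Q, by rw [map_add, hP, hQ]⟩

/-- If the `y`-derivative vanishes (char 0), every monomial is free of `y`. -/
lemma coeff_eq_zero_of_pderiv_eq_zero {p : MvPolynomial (Fin 2) K}
    (hp : pderiv 1 p = 0) : ∀ m : Fin 2 →₀ ℕ, m 1 ≠ 0 → coeff m p = 0 := by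
  intro m hm
  set m' : Fin 2 →₀ ℕ := m - Finsupp.single 1 1 with hm'
  have hmm : m' + Finsupp.single 1 1 = m := by
    ext j
    by_cases hj : j = 1
    · subst hj
      simp only [Finsupp.add_apply, Finsupp.tsub_apply, Finsupp.single_eq_same, hm']
      omega
    · simp only [Finsupp.add_apply, Finsupp.tsub_apply, hm',
        Finsupp.single_eq_of_ne' (fun hh => hj hh.symm)]
      omega
  have := coeff_pderiv 1 m' p
  rw [hp, coeff_zero, hmm] at this
  have hcast : ((m' 1 + 1 : ℕ) : K) ≠ 0 := Nat.cast_ne_zero.mpr (by omega)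
  rcases mul_eq_zero.mp this.symm with h | h
  · exact absurd h hcast
  · exact h

end part3

section part4

variable {K L : Type*} [CommRing K] [CommRing L] [Algebra K L]

/-- Coefficientwise application of a `K`-linear projection `L → K`. -/
def Pi (π : L →ₗ[K] K) (h : MvPolynomial (Fin 2) L) : MvPolynomial (Fin 2) K :=
  ∑ m ∈ h.support, monomial m (π (coeff m h))

lemma coeff_Pi (π : L →ₗ[K] K) (m : Fin 2 →₀ ℕ) (h : MvPolynomial (Fin 2) L) :
    coeff m (Pi π h) = π (coeff m h) := by
  classical
  rw [Pi, coeff_sum]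
  simp only [coeff_monomial]
  rw [Finset.sum_ite_eq' h.support m fun m' => π (coeff m' h)]
  by_cases hm : m ∈ h.support
  · rw [if_pos hm]
  · rw [if_neg hm, notMem_support_iff.mp hm, map_zero]

lemma Pi_add (π : L →ₗ[K] K) (h h' : MvPolynomial (Fin 2) L) :
    Pi π (h + h') = Pi π h + Pi π h' := by
  apply MvPolynomial.ext; intro m
  simp [coeff_Pi, coeff_add]

lemma Pi_monomial (π : L →ₗ[K] K) (m : Fin 2 →₀ ℕ) (b : L) :
    Pi π (monomial m b) = monomial m (π b) := by
  apply MvPolynomial.ext; intro m'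
  simp only [coeff_Pi, coeff_monomial]
  split <;> simp

lemma Pi_map (π : L →ₗ[K] K) (hπ : ∀ x, π (algebraMap K L x) = x)
    (w : MvPolynomial (Fin 2) K) : Pi π (map (algebraMap K L) w) = w := by
  apply MvPolynomial.ext; intro m
  rw [coeff_Pi, coeff_map, hπ]

lemma Pi_mul_map (π : L →ₗ[K] K) (w : MvPolynomial (Fin 2) K)
    (z : MvPolynomial (Fin 2) L) :
    Pi π (map (algebraMap K L) w * z) = w * Pi π z := by
  induction w using MvPolynomial.induction_on' with
  | monomial m b =>
      induction z using MvPolynomial.induction_on' with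
      | monomial m' b' =>
          rw [map_monomial, monomial_mul, Pi_monomial, Pi_monomial, monomial_mul]
          congr 1
          rw [← Algebra.smul_def, map_smul, smul_eq_mul]
      | add z1 z2 hz1 hz2 =>
          rw [mul_add, Pi_add, hz1, hz2, Pi_add, mul_add]
  | add w1 w2 hw1 hw2 =>
      rw [map_add, add_mul, Pi_add, hw1, hw2, add_mul]

lemma Pi_pderiv (π : L →ₗ[K] K) (i : Fin 2) (h : MvPolynomial (Fin 2) L) :
    Pi π (pderiv i h) = pderiv i (Pi π h) := by
  induction h using MvPolynomial.induction_on' with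
  | monomial m b =>
      rw [pderiv_monomial, Pi_monomial, Pi_monomial, pderiv_monomial]
      congr 1
      rw [mul_comm, ← nsmul_eq_mul, map_nsmul, nsmul_eq_mul, mul_comm]
  | add h1 h2' hh1 hh2 =>
      rw [map_add, Pi_add, hh1, hh2, Pi_add, map_add]

lemma Pi_Dd (π : L →ₗ[K] K) (F : MvPolynomial (Fin 2) K) (h : MvPolynomial (Fin 2) L) :
    Pi π (Dd (map (algebraMap K L) F) h) = Dd F (Pi π h) := by
  rw [Dd, Dd, pderiv_map (φ := algebraMap K L) (f := F) (i := 0),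
    pderiv_map (φ := algebraMap K L) (f := F) (i := 1)]
  have : ∀ a b : MvPolynomial (Fin 2) L, Pi π (a - b) = Pi π a - Pi π b := by
    intro a b
    apply MvPolynomial.ext; intro m
    simp [coeff_Pi, coeff_sub]
  rw [this, Pi_mul_map, Pi_mul_map, Pi_pderiv, Pi_pderiv]

end part4


section part5

variable {L : Type*} [Field L]

lemma exists_C_of_isUnit {j : MvPolynomial (Fin 2) L} (hj : IsUnit j) :
    ∃ a : L, a ≠ 0 ∧ j = C a := by
  have hu2 : IsUnit (finSuccEquiv L 1 j) :=
    hj.map (finSuccEquiv L 1 : MvPolynomial (Fin 2) L →+* Polynomial (MvPolynomial (Fin 1) L))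
  obtain ⟨r, hru, hr⟩ := Polynomial.isUnit_iff.mp hu2
  have hu1 : IsUnit (finSuccEquiv L 0 r) :=
    hru.map (finSuccEquiv L 0 : MvPolynomial (Fin 1) L →+* Polynomial (MvPolynomial (Fin 0) L))
  obtain ⟨r0, _, hr0⟩ := Polynomial.isUnit_iff.mp hu1
  obtain ⟨a, ha⟩ : ∃ a : L, r0 = C a := ⟨_, eq_C_of_isEmpty r0⟩
  have hra : r = C a := by
    have := congrArg (finSuccEquiv L 0).symm hr0
    rw [AlgEquiv.symm_apply_apply] at this
    rw [← this, ha]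
    have key := RingHom.congr_fun (finSuccEquiv_comp_C_eq_C (R := L) 0) a
    simpa using key
  have hja : j = C a := by
    have := congrArg (finSuccEquiv L 1).symm hr
    rw [AlgEquiv.symm_apply_apply] at this
    rw [← this, hra]
    have key := RingHom.congr_fun (finSuccEquiv_comp_C_eq_C (R := L) 1) a
    simpa using key
  refine ⟨a, fun h0 => ?_, hja⟩
  rw [hja, h0, map_zero] at hj
  exact hj.ne_zero rfl

end part5

section part6

/-- A surjective ring endomorphism of a Noetherian ring is injective. -/
lemma injective_of_surjective_ringHom {T : Type*} [CommRing T] [IsNoetherianRing T]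
    (β : T →+* T) (hs : Function.Surjective β) : Function.Injective β := by
  let g : ℕ → (T →+* T) := fun n => Nat.rec (RingHom.id T) (fun _ ih => β.comp ih) n
  have hg0 : g 0 = RingHom.id T := rfl
  have hgs : ∀ n, g (n + 1) = β.comp (g n) := fun n => rfl
  have hsurj : ∀ n, Function.Surjective (g n) := by
    intro n
    induction n with
    | zero => exact fun x => ⟨x, rfl⟩
    | succ n ih => rw [hgs]; exact hs.comp ih
  have hmono : ∀ n, RingHom.ker (g n) ≤ RingHom.ker (g (n + 1)) := by
    intro n x hx
    rw [RingHom.mem_ker] at hx ⊢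
    rw [hgs, RingHom.comp_apply, hx, map_zero]
  let chain : ℕ →o Ideal T :=
    ⟨fun n => RingHom.ker (g n), monotone_nat_of_le_succ hmono⟩
  obtain ⟨n, hn⟩ := monotone_stabilizes_iff_noetherian.mpr (inferInstance : IsNoetherian T T) chain
  rw [injective_iff_map_eq_zero]
  intro x hx
  obtain ⟨y, rfl⟩ := hsurj n x
  have hy : y ∈ RingHom.ker (g (n + 1)) := by
    rw [RingHom.mem_ker, hgs, RingHom.comp_apply, hx]
  have hchain : chain n = chain (n + 1) := hn (n + 1) (Nat.le_succ n)
  have : y ∈ RingHom.ker (g n) := by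
    show y ∈ chain n
    rw [hchain]; exact hy
  exact this

end part6

section part7

variable {A B : Type*} [CommRing A] [CommRing B]

lemma aeval_map_comm (u : A →+* B) (χ : MvPolynomial (Fin 2) A ≃ₐ[A] MvPolynomial (Fin 2) A)
    (p : MvPolynomial (Fin 2) A) :
    aeval (fun i => map u (χ (X i))) (map u p) = map u (χ p) := by
  induction p using MvPolynomial.induction_on with
  | C a =>
      have h1 : χ (C a) = C a := by
        have := χ.commutes a
        simpa [algebraMap_eq] using this
      rw [map_C, h1, map_C, aeval_C]
      rfl
  | add p q hp hq => simp only [map_add, hp, hq]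
  | mul_X p j hp =>
      rw [map_mul, map_mul, map_mul, map_mul, hp, map_X, aeval_X]

/-- Base change of a polynomial automorphism along a ring hom. -/
lemma baseChange (u : A →+* B) (ψ : MvPolynomial (Fin 2) A ≃ₐ[A] MvPolynomial (Fin 2) A) :
    ∃ Ψ : MvPolynomial (Fin 2) B ≃ₐ[B] MvPolynomial (Fin 2) B,
      ∀ p, Ψ (map u p) = map u (ψ p) := by
  let αh : MvPolynomial (Fin 2) B →ₐ[B] MvPolynomial (Fin 2) B :=
    aeval fun i => map u (ψ (X i))
  let βh : MvPolynomial (Fin 2) B →ₐ[B] MvPolynomial (Fin 2) B :=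
    aeval fun i => map u (ψ.symm (X i))
  have hαβ : ∀ (χ χ' : MvPolynomial (Fin 2) A ≃ₐ[A] MvPolynomial (Fin 2) A),
      (∀ q, χ (χ' q) = q) →
      ((aeval fun i => map u (χ (X i))).comp (aeval fun i => map u (χ' (X i)))
        : MvPolynomial (Fin 2) B →ₐ[B] MvPolynomial (Fin 2) B) = AlgHom.id B _ := by
    intro χ χ' hinv
    apply MvPolynomial.algHom_ext
    intro i
    rw [AlgHom.comp_apply, aeval_X, aeval_map_comm u χ (χ' (X i)), hinv, AlgHom.id_apply, map_X]
  refine ⟨AlgEquiv.ofAlgHom αh βh (hαβ ψ ψ.symm fun q => ψ.apply_symm_apply q)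
    (hαβ ψ.symm ψ fun q => ψ.symm_apply_apply q), ?_⟩
  intro p
  exact aeval_map_comm u ψ p

end part7

section core

variable {K L : Type*} [Field K] [CharZero K] [Field L] [Algebra K L]

theorem core (F : MvPolynomial (Fin 2) K)
    (Φ : MvPolynomial (Fin 2) L ≃ₐ[L] MvPolynomial (Fin 2) L)
    (hΦ : Φ (X 0) = map (algebraMap K L) F) :
    ∃ φ : MvPolynomial (Fin 2) K ≃ₐ[K] MvPolynomial (Fin 2) K, φ (X 0) = F := by
  classical
  haveI : CharZero L := by
    refine ⟨fun x y h => ?_⟩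
    rw [← map_natCast (algebraMap K L), ← map_natCast (algebraMap K L)] at h
    exact Nat.cast_injective ((algebraMap K L).injective h)
  set kh : K →+* L := algebraMap K L with hkh
  -- the images of the variables
  set c : Fin 2 → MvPolynomial (Fin 2) L := fun i => Φ (X i) with hc
  have hc0 : c 0 = map kh F := hΦ
  have hΦaeval : ∀ q, Φ q = aeval c q := by
    have : (Φ : MvPolynomial (Fin 2) L →ₐ[L] MvPolynomial (Fin 2) L) = aeval c :=
      MvPolynomial.algHom_ext fun i => by rw [aeval_X]; rfl
    intro q
    exact DFunLike.congr_fun this q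
  -- the Jacobian is a nonzero constant
  set j : MvPolynomial (Fin 2) L := Dd (c 0) (c 1) with hj
  obtain ⟨a, ha0, haj⟩ : ∃ a : L, a ≠ 0 ∧ j = C a := by
    apply exists_C_of_isUnit
    set H0 := Φ.symm (X 0) with hH0
    set H1 := Φ.symm (X 1) with hH1
    have e0 : aeval c H0 = X 0 := by rw [← hΦaeval]; exact Φ.apply_symm_apply _
    have e1 : aeval c H1 = X 1 := by rw [← hΦaeval]; exact Φ.apply_symm_apply _
    set A0 := aeval c (pderiv 0 H0)
    set B0 := aeval c (pderiv 1 H0)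
    set A1 := aeval c (pderiv 0 H1)
    set B1 := aeval c (pderiv 1 H1)
    have q1 : A0 * pderiv 0 (c 0) + B0 * pderiv 0 (c 1) = 1 := by
      have := congrArg (pderiv (0 : Fin 2)) e0
      rw [pderiv_aeval] at this
      rw [pderiv_X_self] at this
      linear_combination this
    have q2 : A0 * pderiv 1 (c 0) + B0 * pderiv 1 (c 1) = 0 := by
      have := congrArg (pderiv (1 : Fin 2)) e0
      rw [pderiv_aeval] at this
      rw [pderiv_X_of_ne (by decide)] at this
      linear_combination this
    have q3 : A1 * pderiv 0 (c 0) + B1 * pderiv 0 (c 1) = 0 := by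
      have := congrArg (pderiv (0 : Fin 2)) e1
      rw [pderiv_aeval] at this
      rw [pderiv_X_of_ne (by decide)] at this
      linear_combination this
    have q4 : A1 * pderiv 1 (c 0) + B1 * pderiv 1 (c 1) = 1 := by
      have := congrArg (pderiv (1 : Fin 2)) e1
      rw [pderiv_aeval] at this
      rw [pderiv_X_self] at this
      linear_combination this
    have key : (A0 * B1 - A1 * B0) * j = 1 := by
      have expand : (A0 * B1 - A1 * B0) * j =
          (A0 * pderiv 0 (c 0) + B0 * pderiv 0 (c 1)) *
            (A1 * pderiv 1 (c 0) + B1 * pderiv 1 (c 1)) -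
          (A0 * pderiv 1 (c 0) + B0 * pderiv 1 (c 1)) *
            (A1 * pderiv 0 (c 0) + B1 * pderiv 0 (c 1)) := by
        rw [hj, Dd]; ring
      rw [expand, q1, q2, q3, q4]; ring
    exact IsUnit.of_mul_eq_one _ (by rw [mul_comm]; exact key)
  -- a K-linear projection L → K fixing K
  obtain ⟨π, hπ⟩ := (Algebra.linearMap K L).exists_leftInverse_of_injective
    (LinearMap.ker_eq_bot.mpr (algebraMap K L).injective)
  have hπ1 : ∀ x : K, π (algebraMap K L x) = x := fun x => DFunLike.congr_fun hπ x
  -- the slice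
  set s : MvPolynomial (Fin 2) K := Pi π (C a⁻¹ * c 1) with hs_def
  have hDG : Dd (map kh F) (C a⁻¹ * c 1) = 1 := by
    rw [Dd_C_mul, ← hc0, ← hj, haj, ← map_mul, inv_mul_cancel₀ ha0, map_one]
  have hs : Dd F s = 1 := by
    rw [hs_def, ← Pi_Dd π F, hDG]
    have : (1 : MvPolynomial (Fin 2) L) = map (algebraMap K L) 1 := by rw [map_one]
    rw [this, Pi_map π hπ1]
  -- the candidate automorphism
  set g : Fin 2 → MvPolynomial (Fin 2) K := ![F, s] with hg
  have hg0 : g 0 = F := rfl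
  have hg1 : g 1 = s := rfl
  set α : MvPolynomial (Fin 2) K →ₐ[K] MvPolynomial (Fin 2) K := aeval g with hα
  -- kernel elements are in the range of α
  have hker : ∀ h₀ : MvPolynomial (Fin 2) K, Dd F h₀ = 0 → ∃ w, α w = h₀ := by
    intro h₀ hD
    set p : MvPolynomial (Fin 2) L := Φ.symm (map kh h₀) with hp
    have hph : aeval c p = map kh h₀ := by rw [← hΦaeval]; exact Φ.apply_symm_apply _
    have hDL : Dd (c 0) (aeval c p) = aeval c (pderiv 1 p) * j := Dd_aeval c p
    have hzero : aeval c (pderiv 1 p) * C a = 0 := by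
      rw [← haj, ← hDL, hph, hc0, ← map_Dd, hD, map_zero]
    have hpd : pderiv 1 p = 0 := by
      have h1 : aeval c (pderiv 1 p) = 0 := by
        rcases mul_eq_zero.mp hzero with h | h
        · exact h
        · exact absurd h (by simpa using ha0)
      have h2 : Φ (pderiv 1 p) = Φ 0 := by rw [hΦaeval, map_zero, h1]
      exact Φ.injective h2
    have hsupp : ∀ m ∈ p.support, (m : Fin 2 →₀ ℕ) 1 = 0 := by
      intro m hm
      by_contra hne
      exact absurd (coeff_eq_zero_of_pderiv_eq_zero hpd m hne) (mem_support_iff.mp hm)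
    -- p only involves the first variable
    refine ⟨∑ m ∈ p.support, X 0 ^ (m 0) * C (π (coeff m p)), ?_⟩
    have hsingle : ∀ m ∈ p.support, m = Finsupp.single 0 (m 0) := by
      intro m hm
      ext i
      fin_cases i
      · simp
      · show m 1 = (Finsupp.single (0 : Fin 2) (m 0)) 1
        rw [hsupp m hm, Finsupp.single_eq_of_ne' (by decide : (0 : Fin 2) ≠ 1)]
    have hexp : map kh h₀ = ∑ m ∈ p.support, map kh (F ^ (m 0)) * C (coeff m p) := by
      rw [← hph]
      conv_lhs => rw [p.as_sum]
      rw [map_sum]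
      apply Finset.sum_congr rfl
      intro m hm
      have hps : (Finsupp.prod m fun i k => c i ^ k) = c 0 ^ (m 0) := by
        conv_lhs => rw [hsingle m hm]
        exact Finsupp.prod_single_index (pow_zero (c 0))
      rw [aeval_monomial, hps, hc0, ← map_pow, algebraMap_eq]
      exact mul_comm _ _
    have hPih : h₀ = ∑ m ∈ p.support, F ^ (m 0) * C (π (coeff m p)) := by
      have := congrArg (Pi π) hexp
      rw [Pi_map π hπ1] at this
      rw [this]
      have hsum : Pi π (∑ m ∈ p.support, map kh (F ^ (m 0)) * C (coeff m p)) =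
          ∑ m ∈ p.support, Pi π (map kh (F ^ (m 0)) * C (coeff m p)) := by
        induction p.support using Finset.induction_on with
        | empty =>
            apply MvPolynomial.ext; intro mm
            simp [coeff_Pi]
        | insert _ _ hni ih =>
            rw [Finset.sum_insert hni, Finset.sum_insert hni, Pi_add, ih]
      rw [hsum]
      apply Finset.sum_congr rfl
      intro m _
      rw [Pi_mul_map, C_apply, Pi_monomial, C_apply]
    rw [hPih, map_sum]
    apply Finset.sum_congr rfl
    intro m _
    rw [map_mul, map_pow, aeval_X, aeval_C, hg0, algebraMap_eq]
  -- local nilpotency over K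
  have hmapiter : ∀ (n : ℕ) (h₀ : MvPolynomial (Fin 2) K),
      map kh ((fun q => Dd F q)^[n] h₀) = (fun q => Dd (c 0) q)^[n] (map kh h₀) := by
    intro n
    induction n with
    | zero => intro h₀; rfl
    | succ n ih =>
        intro h₀
        rw [Function.iterate_succ_apply', Function.iterate_succ_apply', map_Dd, ih, hc0]
  have hiterL : ∀ (n : ℕ) (p : MvPolynomial (Fin 2) L),
      (fun q => Dd (c 0) q)^[n] (aeval c p) =
        aeval c ((fun q => pderiv (1 : Fin 2) q)^[n] p) * C (a ^ n) := by
    intro n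
    induction n with
    | zero => intro p; simp
    | succ n ih =>
        intro p
        rw [Function.iterate_succ_apply', ih, Dd_mul_C, Dd_aeval, ← hj, haj,
          Function.iterate_succ_apply', pow_succ, map_mul]
        ring
  have hLND : ∀ h₀ : MvPolynomial (Fin 2) K, ∃ n, (fun q => Dd F q)^[n] h₀ = 0 := by
    intro h₀
    set p : MvPolynomial (Fin 2) L := Φ.symm (map kh h₀) with hp
    have hph : aeval c p = map kh h₀ := by rw [← hΦaeval]; exact Φ.apply_symm_apply _
    obtain ⟨n, hn⟩ := exists_iterate_pderiv_zero p
    refine ⟨n, MvPolynomial.map_injective kh (algebraMap K L).injective ?_⟩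
    rw [hmapiter, map_zero, ← hph, hiterL, hn, map_zero, zero_mul]
  -- Taylor expansion: everything is in the range of α
  have htay : ∀ (n : ℕ) (h₀ : MvPolynomial (Fin 2) K),
      (fun q => Dd F q)^[n] h₀ = 0 → ∃ w, α w = h₀ := by
    intro n
    induction n with
    | zero => intro h₀ h0; exact ⟨0, by rw [map_zero, ← h0]; rfl⟩
    | succ n ih =>
        intro h₀ hiter
        have hb : (fun q => Dd F q)^[n] (Dd F h₀) = 0 := by
          rw [← Function.iterate_succ_apply]; exact hiter
        obtain ⟨wb, hwb⟩ := ih (Dd F h₀) hb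
        obtain ⟨Wb, hWb⟩ := exists_pderiv_eq wb
        have hDB : Dd F (α Wb) = Dd F h₀ := by
          have := Dd_aeval g Wb
          rw [hg0, hg1, hWb] at this
          rw [hα]
          rw [this, hs, mul_one, hwb]
        have hker0 : Dd F (h₀ - α Wb) = 0 := by rw [Dd_sub, hDB, sub_self]
        obtain ⟨w0, hw0⟩ := hker _ hker0
        exact ⟨w0 + Wb, by rw [map_add, hw0, sub_add_cancel]⟩
  have hsurj : Function.Surjective α := by
    intro h₀
    obtain ⟨n, hn⟩ := hLND h₀
    exact htay n h₀ hn
  have hinj : Function.Injective α :=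
    injective_of_surjective_ringHom α.toRingHom hsurj
  refine ⟨AlgEquiv.ofBijective α ⟨hinj, hsurj⟩, ?_⟩
  show α (X 0) = F
  rw [hα, aeval_X, hg0]

end core

end Aux13

end

/-- Let `R` be a domain containing `ℤ` with field of fractions `K`, and `S` an over-domain
of `R`. If `f ∈ R[x_1,x_2]` is a coordinate of `S[x_1,x_2]` over `S`, then `f` is a
coordinate of `K[x_1,x_2]` over `K`. -/
theorem statement13 {R S : Type*} [CommRing R] [IsDomain R] [CharZero R]
    [CommRing S] [IsDomain S] [Algebra R S] (hRS : Function.Injective (algebraMap R S))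
    (f : MvPolynomial (Fin 2) R)
    (hf : ∃ ψ : PolyAut S 2, ψ (X 0) = MvPolynomial.map (algebraMap R S) f) :
    ∃ φ : PolyAut (FractionRing R) 2,
      φ (X 0) = MvPolynomial.map (algebraMap R (FractionRing R)) f := by
  obtain ⟨ψ, hψ⟩ := hf
  obtain ⟨Ψ, hΨ⟩ := Aux13.baseChange (algebraMap S (FractionRing S)) ψ
  have hinj : Function.Injective ((algebraMap S (FractionRing S)).comp (algebraMap R S)) :=
    (IsFractionRing.injective S (FractionRing S)).comp hRS
  letI : Algebra (FractionRing R) (FractionRing S) := (IsFractionRing.lift hinj).toAlgebra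
  have halg : (algebraMap (FractionRing R) (FractionRing S)) = IsFractionRing.lift hinj :=
    RingHom.algebraMap_toAlgebra _
  haveI : CharZero (FractionRing R) := by
    refine ⟨fun x y h => ?_⟩
    rw [← map_natCast (algebraMap R (FractionRing R)),
      ← map_natCast (algebraMap R (FractionRing R))] at h
    exact Nat.cast_injective (IsFractionRing.injective R (FractionRing R) h)
  have hcomp : (algebraMap (FractionRing R) (FractionRing S)).comp (algebraMap R (FractionRing R))
      = (algebraMap S (FractionRing S)).comp (algebraMap R S) := by
    refine RingHom.ext fun r => ?_
    rw [halg, RingHom.comp_apply, IsFractionRing.lift_algebraMap hinj r]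
  have hmf : map (algebraMap (FractionRing R) (FractionRing S))
        (map (algebraMap R (FractionRing R)) f)
      = map (algebraMap S (FractionRing S)) (map (algebraMap R S) f) := by
    rw [map_map, map_map, hcomp]
  have hΨX : Ψ (X 0) = map (algebraMap (FractionRing R) (FractionRing S))
      (map (algebraMap R (FractionRing R)) f) := by
    have hX : (X 0 : MvPolynomial (Fin 2) (FractionRing S))
        = map (algebraMap S (FractionRing S)) (X 0) := (map_X _ 0).symm
    rw [hX, hΨ, hψ, hmf]
  exact Aux13.core (map (algebraMap R (FractionRing R)) f) Ψ hΨX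
end

section
/- Let R be an integral domain containing ℤ with field of fractions K, and let a_1, a_2 ∈ R∖{0} and b ∈ R be such that a_1/a_2 does not belong to V(R). Then f := a_1x_1 + a_2x_2 + b is not a coordinate of R[x_1,x_2] over R. -/
open MvPolynomial

/-- `V(R)` viewed inside an `R`-algebra `K`: fractions `α/β` with `α, β ∈ R∖{0}` and
`αR + βR = R`. -/
def VSet (R : Type*) (K : Type*) [CommRing R] [CommRing K] [Algebra R K] : Set K :=
  {x : K | ∃ α β : R, α ≠ 0 ∧ β ≠ 0 ∧ Ideal.span ({α, β} : Set R) = ⊤ ∧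
    x * algebraMap R K β = algebraMap R K α}

/-- If `R` is a domain containing `ℤ`, `a₁, a₂ ∈ R∖{0}`, `b ∈ R` and `a₁/a₂ ∉ V(R)`,
then `a₁x_1 + a₂x_2 + b` is not a coordinate of `R[x_1,x_2]` over `R`. -/
theorem statement14 {R : Type*} [CommRing R] [IsDomain R] [CharZero R]
    (a₁ a₂ : R) (ha₁ : a₁ ≠ 0) (ha₂ : a₂ ≠ 0) (b : R)
    (hV : algebraMap R (FractionRing R) a₁ / algebraMap R (FractionRing R) a₂
      ∉ VSet R (FractionRing R)) :
    ¬∃ φ : PolyAut R 2, φ (X 0) = C a₁ * X 0 + C a₂ * X 1 + C b := by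
  rintro ⟨φ, hφ⟩
  -- span {a₁, a₂} ≠ ⊤, else a₁/a₂ ∈ V(R)
  have hspan : Ideal.span ({a₁, a₂} : Set R) ≠ ⊤ := by
    intro h
    apply hV
    refine ⟨a₁, a₂, ha₁, ha₂, h, ?_⟩
    have h2 : algebraMap R (FractionRing R) a₂ ≠ 0 := fun hc =>
      ha₂ (IsFractionRing.injective R (FractionRing R) (by simpa using hc))
    field_simp
  obtain ⟨m, hmmax, hmle⟩ := Ideal.exists_le_maximal _ hspan
  have ha₁m : a₁ ∈ m := hmle (Ideal.subset_span (by simp))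
  have ha₂m : a₂ ∈ m := hmle (Ideal.subset_span (by simp))
  have key : (X 0 : MvPolynomial (Fin 2) R)
      = C a₁ * φ.symm (X 0) + C a₂ * φ.symm (X 1) + C b := by
    have h1 := congrArg φ.symm hφ
    rw [AlgEquiv.symm_apply_apply] at h1
    have hc : ∀ r : R, φ.symm (C r) = C r := fun r => by
      simpa [MvPolynomial.algebraMap_eq] using φ.symm.commutes r
    simpa [map_add, map_mul, hc] using h1
  apply_fun MvPolynomial.map (Ideal.Quotient.mk m) at key
  have hz1 : Ideal.Quotient.mk m a₁ = 0 := Ideal.Quotient.eq_zero_iff_mem.mpr ha₁m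
  have hz2 : Ideal.Quotient.mk m a₂ = 0 := Ideal.Quotient.eq_zero_iff_mem.mpr ha₂m
  rw [MvPolynomial.map_X, map_add, map_add, map_mul, map_mul,
    MvPolynomial.map_C, MvPolynomial.map_C, MvPolynomial.map_C, hz1, hz2] at key
  simp only [MvPolynomial.C_0, zero_mul, zero_add] at key
  haveI : Nontrivial (R ⧸ m) := Ideal.Quotient.nontrivial_iff.mpr hmmax.ne_top
  have hcf := congrArg (MvPolynomial.coeff (Finsupp.single 0 1)) key
  rw [MvPolynomial.coeff_X, MvPolynomial.coeff_C, if_pos rfl,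
    if_neg (by simp [eq_comm, Finsupp.single_eq_zero])] at hcf
  exact one_ne_zero hcf
end
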